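/- arXiv:1701.01780 — 2 statements merged into one kernel-verified Lean document; each statement's English description precedes it below -/
import Mathlib

section
/- For each z ∈ ℂ with Im(z) > 0 and constants a ∈ ℝ, b > 0, the equation α = 1/(a − z − b·α) has exactly one solution α ∈ ℂ with Im(α) > 0. -/
/-- For each `z ∈ ℂ` with `Im z > 0` and constants `a ∈ ℝ`, `b > 0`, the
self-consistent canonical equation `α = 1 / (a - z - b α)` has exactly one
solution `α ∈ ℂ` with `Im α > 0`. -/
theorem canonical_equation_unique_solution
    (z : ℂ) (hz : 0 < z.im) (a b : ℝ) (hb : 0 < b) :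
    ∃! α : ℂ, 0 < α.im ∧ α = ((a : ℂ) - z - (b : ℂ) * α)⁻¹ := by
  set w : ℂ := (a : ℂ) - z with hw
  have hb0 : (b : ℂ) ≠ 0 := by exact_mod_cast hb.ne'
  obtain ⟨s, hs⟩ : ∃ s : ℂ, s ^ 2 = w ^ 2 - 4 * b :=
    ⟨(w ^ 2 - 4 * b) ^ (((2 : ℕ) : ℂ)⁻¹), Complex.cpow_nat_inv_pow _ two_ne_zero⟩
  set α₀ : ℂ := (w + s) / (2 * b) with hα₀def
  set α₁ : ℂ := (w - s) / (2 * b) with hα₁def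
  have h2b : (2 : ℂ) * b ≠ 0 := by
    simp [hb0]
  have hsum : α₀ + α₁ = w / b := by
    rw [hα₀def, hα₁def, ← add_div, div_eq_div_iff h2b hb0]
    ring
  have hprod : α₀ * α₁ = 1 / b := by
    rw [hα₀def, hα₁def, div_mul_div_comm, div_eq_div_iff (mul_ne_zero h2b h2b) hb0]
    linear_combination (-(b : ℂ)) * hs
  clear_value α₀ α₁
  clear hα₀def hα₁def hs
  have hfac : ∀ α : ℂ, b * α ^ 2 - w * α + 1 = b * (α - α₀) * (α - α₁) := by
    intro α
    have h : b * (α - α₀) * (α - α₁)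
        = b * α ^ 2 - (b * (α₀ + α₁)) * α + b * (α₀ * α₁) := by ring
    rw [h, hsum, hprod]
    field_simp
  have hroots : ∀ α : ℂ, b * α ^ 2 - w * α + 1 = 0 ↔ (α = α₀ ∨ α = α₁) := by
    intro α
    rw [hfac α]
    constructor
    · intro h
      rcases mul_eq_zero.mp h with h1 | h2
      · rcases mul_eq_zero.mp h1 with h3 | h4
        · exact absurd h3 hb0
        · exact Or.inl (sub_eq_zero.mp h4)
      · exact Or.inr (sub_eq_zero.mp h2)
    · rintro (rfl | rfl) <;> ring
  have hden : ∀ α : ℂ, 0 < α.im → w - b * α ≠ 0 := by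
    intro α hα h
    have h2 : (w - b * α).im = -z.im - b * α.im := by
      simp [hw, Complex.sub_im, Complex.mul_im]
    rw [h] at h2
    simp only [Complex.zero_im] at h2
    nlinarith
  have hequiv : ∀ α : ℂ, 0 < α.im → (α = (w - b * α)⁻¹ ↔ (α = α₀ ∨ α = α₁)) := by
    intro α hα
    rw [← hroots α]
    constructor
    · intro h
      have h1 : α * (w - b * α) = 1 := by
        nth_rewrite 1 [h]
        exact inv_mul_cancel₀ (hden α hα)
      linear_combination -h1
    · intro h
      have h1 : (w - b * α) * α = 1 := by linear_combination -h
      exact eq_inv_of_mul_eq_one_left (by linear_combination h1)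
  have hprod' : (b : ℂ) * (α₀ * α₁) = 1 := by
    rw [hprod]; field_simp
  have hα₀ne : α₀ ≠ 0 := fun h => by simp [h] at hprod'
  have hns_pos : 0 < Complex.normSq α₀ := Complex.normSq_pos.mpr hα₀ne
  have hα₁eq : α₁ = ((b : ℂ) * α₀)⁻¹ :=
    eq_inv_of_mul_eq_one_left (by linear_combination hprod')
  have him : α₁.im = -α₀.im / (b * Complex.normSq α₀) := by
    rw [hα₁eq, Complex.inv_im]
    have h1 : ((b : ℂ) * α₀).im = b * α₀.im := by
      simp [Complex.mul_im]
    have h2 : Complex.normSq ((b : ℂ) * α₀) = b ^ 2 * Complex.normSq α₀ := by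
      rw [Complex.normSq_mul, Complex.normSq_ofReal]; ring
    rw [h1, h2, div_eq_div_iff (by positivity) (by positivity)]
    ring
  have hsumim : α₀.im + α₁.im = -z.im / b := by
    have h := congrArg Complex.im hsum
    simpa [Complex.add_im, hw, Complex.div_ofReal_im, Complex.sub_im] using h
  have hsumneg : α₀.im + α₁.im < 0 := by
    rw [hsumim]; exact div_neg_of_neg_of_pos (by linarith) hb
  rcases lt_trichotomy α₀.im 0 with h0 | h0 | h0
  · have h1pos : 0 < α₁.im := by
      rw [him]
      exact div_pos (by linarith) (by positivity)
    refine ⟨α₁, ⟨h1pos, (hequiv α₁ h1pos).mpr (Or.inr rfl)⟩, ?_⟩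
    rintro β ⟨hβim, hβeq⟩
    rcases (hequiv β hβim).mp hβeq with rfl | rfl
    · linarith
    · rfl
  · exfalso
    rw [h0] at him
    simp at him
    linarith
  · have h1neg : α₁.im < 0 := by
      rw [him]
      exact div_neg_of_neg_of_pos (by linarith) (by positivity)
    refine ⟨α₀, ⟨h0, (hequiv α₀ h0).mpr (Or.inl rfl)⟩, ?_⟩
    rintro β ⟨hβim, hβeq⟩
    rcases (hequiv β hβim).mp hβeq with rfl | rfl
    · rfl
    · linarith
end

section
/- For z ∈ ℂ with Im(z) > 0, a ∈ ℝ, and b > 0, the unique solution with positive imaginary part of α = 1/(a − z − bα) is α = ((a − z) − √((a − z)² − 4b)) / (2b), where the branch of the square root is chosen so that Im(α) > 0; moreover |α| ≤ 1/Im(z). -/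
/-- For `z` with `Im z > 0`, `a ∈ ℝ`, `b > 0`, the unique solution with positive
imaginary part of `α = 1 / (a - z - b α)` equals
`((a - z) - √((a - z)² - 4b)) / (2b)` for the branch of the square root chosen
so that `Im α > 0`; moreover `|α| ≤ 1 / Im z`. -/
theorem canonical_equation_solution_formula
    (z : ℂ) (hz : 0 < z.im) (a b : ℝ) (hb : 0 < b) (α : ℂ)
    (hα : 0 < α.im ∧ α = ((a : ℂ) - z - (b : ℂ) * α)⁻¹) :
    (∃ s : ℂ, s ^ 2 = ((a : ℂ) - z) ^ 2 - 4 * (b : ℂ) ∧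
      α = (((a : ℂ) - z) - s) / (2 * (b : ℂ))) ∧
    ‖α‖ ≤ 1 / z.im := by
  obtain ⟨him, heq⟩ := hα
  set w : ℂ := (a : ℂ) - z - (b : ℂ) * α with hw
  have hwim : w.im = -z.im - b * α.im := by
    simp [hw, Complex.sub_im, Complex.mul_im]
  have hwim_neg : w.im < 0 := by
    rw [hwim]
    nlinarith [mul_pos hb him]
  have hwne : w ≠ 0 := fun h => by simp [h] at hwim_neg
  have hwα : w * α = 1 := by rw [heq]; field_simp
  have hq : (b : ℂ) * α ^ 2 - ((a : ℂ) - z) * α + 1 = 0 := by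
    have h := hwα
    rw [hw] at h
    linear_combination -h
  constructor
  · refine ⟨(a : ℂ) - z - 2 * b * α, ?_, ?_⟩
    · linear_combination 4 * (b : ℂ) * hq
    · have hbne : (b : ℂ) ≠ 0 := by exact_mod_cast hb.ne'
      field_simp
      ring
  · have habs : z.im ≤ ‖w‖ := by
      calc z.im ≤ |w.im| := by rw [abs_of_neg hwim_neg, hwim]; nlinarith [mul_pos hb him]
        _ ≤ ‖w‖ := Complex.abs_im_le_norm w
    rw [heq, norm_inv]
    rw [one_div]
    exact inv_anti₀ hz habs
end
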